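/- arXiv:2504.01223 — 3 statements merged into one kernel-verified Lean document; each statement's English description precedes it below -/
import Mathlib

section
/- Let Z0, Z1 be real-valued random variables with CDFs F_{Z0}, F_{Z1}, let μ be a Borel probability measure on ℝ, and let c : [0,1]² → ℝ be continuous. Let {r_s}_{s>0} be a family of continuous, nondecreasing, globally Lipschitz functions ℝ → ℝ with limits 0 at −∞ and 1 at +∞, such that lim_{s→∞} r_s(z) = H(z) = 1_{z>0} for all z ∈ ℝ \ {0} and lim_{s→∞} r_s(0) = r0 > 0. If μ({z}) = 0 for every point z that is an atom of the law of Z0 or of the law of Z1, then, with F_{Z_k}^{(s)}(t) := 1 − E[r_s(Z_k − t)], one has ∫ c(F_{Z0}(t), F_{Z1}(t)) μ(dt) = lim_{s→∞} ∫ c(F_{Z0}^{(s)}(t), F_{Z1}^{(s)}(t)) μ(dt). -/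
open MeasureTheory Set Filter

lemma stmt12_r_mem {r : ℝ → ℝ → ℝ} {s : ℝ} (hmono : Monotone (r s))
    (hbot : Tendsto (r s) atBot (nhds 0)) (htop : Tendsto (r s) atTop (nhds 1))
    (x : ℝ) : r s x ∈ Icc (0:ℝ) 1 :=
  ⟨hmono.le_of_tendsto hbot x, hmono.ge_of_tendsto htop x⟩

lemma stmt12_inner {Ω : Type*} [MeasurableSpace Ω] (P : Measure Ω) [IsProbabilityMeasure P]
    {Z : Ω → ℝ} (hZ : Measurable Z)
    {r : ℝ → ℝ → ℝ}
    (hrcont : ∀ s > (0 : ℝ), Continuous (r s))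
    (hmem : ∀ s > (0 : ℝ), ∀ x, r s x ∈ Icc (0:ℝ) 1)
    (hH : ∀ z : ℝ, z ≠ 0 → Tendsto (fun s => r s z) atTop
      (nhds (if 0 < z then (1 : ℝ) else 0)))
    {t : ℝ} (ht : P {ω | Z ω = t} = 0) :
    Tendsto (fun s => 1 - ∫ ω, r s (Z ω - t) ∂P) atTop
      (nhds ((P {ω | Z ω ≤ t}).toReal)) := by
  have hms : MeasurableSet {ω | t < Z ω} := hZ measurableSet_Ioi
  have key : Tendsto (fun s => ∫ ω, r s (Z ω - t) ∂P) atTop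
      (nhds (∫ ω, ({ω | t < Z ω}).indicator (fun _ => (1:ℝ)) ω ∂P)) := by
    apply tendsto_integral_filter_of_dominated_convergence (fun _ => (1:ℝ))
    · filter_upwards [eventually_gt_atTop (0:ℝ)] with s hs
      exact (((hrcont s hs).measurable.comp (hZ.sub measurable_const))).aestronglyMeasurable
    · filter_upwards [eventually_gt_atTop (0:ℝ)] with s hs
      refine Eventually.of_forall fun ω => ?_
      have := hmem s hs (Z ω - t)
      rw [Real.norm_eq_abs, abs_le]
      constructor <;> linarith [this.1, this.2]
    · exact integrable_const 1
    · have hnull : ∀ᵐ ω ∂P, Z ω ≠ t := by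
        rw [ae_iff]; simpa using ht
      filter_upwards [hnull] with ω hω
      have hz : Z ω - t ≠ 0 := sub_ne_zero.mpr hω
      have := hH (Z ω - t) hz
      rcases lt_or_gt_of_ne hω with h | h
      · have h' : ¬ (0 < Z ω - t) := by linarith
        simp only [h', if_false] at this
        simpa [Set.indicator, Set.mem_setOf_eq, not_lt.mpr h.le] using this
      · have h' : (0 < Z ω - t) := by linarith
        simp only [h', if_true] at this
        simpa [Set.indicator, Set.mem_setOf_eq, h] using this
  have hval : ∫ ω, ({ω | t < Z ω}).indicator (fun _ => (1:ℝ)) ω ∂P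
      = (P {ω | t < Z ω}).toReal := by
    rw [integral_indicator_const (1:ℝ) hms]; simp; rfl
  rw [hval] at key
  have hcompl : (P {ω | Z ω ≤ t}).toReal = 1 - (P {ω | t < Z ω}).toReal := by
    have heq : {ω | t < Z ω} = {ω | Z ω ≤ t}ᶜ := by ext ω; simp [not_le]
    have hmsle : MeasurableSet {ω | Z ω ≤ t} := hZ measurableSet_Iic
    rw [heq, prob_compl_eq_one_sub hmsle]
    have h1 : P {ω | Z ω ≤ t} ≤ 1 := prob_le_one
    rw [ENNReal.toReal_sub_of_le h1 ENNReal.one_ne_top]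
    simp
  rw [hcompl]
  exact (tendsto_const_nhds.sub key)

/-- For continuous cost `c` on `[0,1]²` and a relaxation family `r_s`
converging pointwise to `H(z) = 1_{z>0}` off `0` with `r_s(0) → r0 > 0`, if `μ` assigns
no mass to any atom of the laws of `Z0` or `Z1`, then the relaxed bias
`∫ c(F_{Z0}^{(s)}(t), F_{Z1}^{(s)}(t)) μ(dt)` converges, as `s → ∞`, to
`∫ c(F_{Z0}(t), F_{Z1}(t)) μ(dt)`. -/
theorem stmt_12 {Ω : Type*} [MeasurableSpace Ω] (P : MeasureTheory.Measure Ω)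
    [MeasureTheory.IsProbabilityMeasure P]
    (Z0 Z1 : Ω → ℝ) (hZ0 : Measurable Z0) (hZ1 : Measurable Z1)
    (μ : MeasureTheory.Measure ℝ) [MeasureTheory.IsProbabilityMeasure μ]
    (c : ℝ → ℝ → ℝ)
    (hc : ContinuousOn (fun p : ℝ × ℝ => c p.1 p.2) (Set.Icc (0 : ℝ) 1 ×ˢ Set.Icc (0 : ℝ) 1))
    (r : ℝ → ℝ → ℝ)
    (hrcont : ∀ s > (0 : ℝ), Continuous (r s))
    (hrmono : ∀ s > (0 : ℝ), Monotone (r s))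
    (hrLip : ∀ s > (0 : ℝ), ∃ K : NNReal, LipschitzWith K (r s))
    (hbot : ∀ s > (0 : ℝ), Filter.Tendsto (r s) Filter.atBot (nhds 0))
    (htop : ∀ s > (0 : ℝ), Filter.Tendsto (r s) Filter.atTop (nhds 1))
    (hH : ∀ z : ℝ, z ≠ 0 → Filter.Tendsto (fun s => r s z) Filter.atTop
      (nhds (if 0 < z then (1 : ℝ) else 0)))
    (r0 : ℝ) (hr0pos : 0 < r0)
    (hH0 : Filter.Tendsto (fun s => r s 0) Filter.atTop (nhds r0))
    (hatoms : ∀ z : ℝ, (P {ω | Z0 ω = z} ≠ 0 ∨ P {ω | Z1 ω = z} ≠ 0) → μ {z} = 0) :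
    Filter.Tendsto
      (fun s => ∫ t, c (1 - ∫ ω, r s (Z0 ω - t) ∂P) (1 - ∫ ω, r s (Z1 ω - t) ∂P) ∂μ)
      Filter.atTop
      (nhds (∫ t, c ((P {ω | Z0 ω ≤ t}).toReal) ((P {ω | Z1 ω ≤ t}).toReal) ∂μ)) := by
  have hmem : ∀ s > (0:ℝ), ∀ x, r s x ∈ Icc (0:ℝ) 1 := fun s hs x =>
    stmt12_r_mem (hrmono s hs) (hbot s hs) (htop s hs) x
  -- relaxed CDFs lie in [0,1]
  have hFmem : ∀ (Z : Ω → ℝ), Measurable Z → ∀ s > (0:ℝ), ∀ t : ℝ,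
      (1 - ∫ ω, r s (Z ω - t) ∂P) ∈ Icc (0:ℝ) 1 := by
    intro Z hZ s hs t
    have hintg : Integrable (fun ω => r s (Z ω - t)) P := by
      refine (integrable_const (1:ℝ)).mono'
        (((hrcont s hs).measurable.comp (hZ.sub measurable_const)).aestronglyMeasurable) ?_
      refine Eventually.of_forall fun ω => ?_
      have := hmem s hs (Z ω - t)
      rw [Real.norm_eq_abs, abs_le]; constructor <;> linarith [this.1, this.2]
    have h0 : 0 ≤ ∫ ω, r s (Z ω - t) ∂P :=
      integral_nonneg fun ω => (hmem s hs _).1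
    have h1 : ∫ ω, r s (Z ω - t) ∂P ≤ 1 := by
      calc ∫ ω, r s (Z ω - t) ∂P ≤ ∫ _ω, (1:ℝ) ∂P :=
            integral_mono hintg (integrable_const 1) fun ω => (hmem s hs _).2
        _ = 1 := by simp
    constructor <;> simp <;> linarith
  -- relaxed CDFs are continuous in t
  have hFcont : ∀ (Z : Ω → ℝ), Measurable Z → ∀ s > (0:ℝ),
      Continuous (fun t : ℝ => 1 - ∫ ω, r s (Z ω - t) ∂P) := by
    intro Z hZ s hs
    refine continuous_const.sub ?_
    apply continuous_of_dominated (bound := fun _ => (1:ℝ))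
    · exact fun t => ((hrcont s hs).measurable.comp (hZ.sub measurable_const)).aestronglyMeasurable
    · intro t
      refine Eventually.of_forall fun ω => ?_
      have := hmem s hs (Z ω - t)
      rw [Real.norm_eq_abs, abs_le]; constructor <;> linarith [this.1, this.2]
    · exact integrable_const 1
    · refine Eventually.of_forall fun ω => ?_
      exact (hrcont s hs).comp (continuous_const.sub continuous_id)
  -- true CDFs in [0,1]
  have hCDFmem : ∀ (Z : Ω → ℝ) (t : ℝ), (P {ω | Z ω ≤ t}).toReal ∈ Icc (0:ℝ) 1 :=
    fun Z t => ⟨ENNReal.toReal_nonneg, by simpa using ENNReal.toReal_mono ENNReal.one_ne_top prob_le_one⟩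
  -- bound on c
  obtain ⟨C, hC⟩ : ∃ C, ∀ p ∈ (Icc (0:ℝ) 1 ×ˢ Icc (0:ℝ) 1),
      ‖(fun p : ℝ × ℝ => c p.1 p.2) p‖ ≤ C :=
    (isCompact_Icc.prod isCompact_Icc).exists_bound_of_continuousOn hc
  -- the bad set is μ-null
  have hbad : ∀ᵐ t ∂μ, P {ω | Z0 ω = t} = 0 ∧ P {ω | Z1 ω = t} = 0 := by
    have hcnt : Set.Countable {t : ℝ | P {ω | Z0 ω = t} ≠ 0 ∨ P {ω | Z1 ω = t} ≠ 0} := by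
      have h0 := Measure.countable_meas_level_set_pos (μ := P) hZ0
      have h1 := Measure.countable_meas_level_set_pos (μ := P) hZ1
      refine Set.Countable.mono ?_ (h0.union h1)
      intro t ht
      rcases ht with h | h
      · exact Or.inl (pos_iff_ne_zero.mpr h)
      · exact Or.inr (pos_iff_ne_zero.mpr h)
    have hnull : μ {t : ℝ | P {ω | Z0 ω = t} ≠ 0 ∨ P {ω | Z1 ω = t} ≠ 0} = 0 := by
      rw [← Set.biUnion_of_singleton {t : ℝ | P {ω | Z0 ω = t} ≠ 0 ∨ P {ω | Z1 ω = t} ≠ 0}]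
      rw [measure_biUnion_null_iff hcnt]
      exact fun t ht => hatoms t ht
    rw [ae_iff]
    convert hnull using 2
    ext t
    simp only [Set.mem_setOf_eq]
    tauto
  -- main dominated convergence
  apply tendsto_integral_filter_of_dominated_convergence (fun _ => C)
  · filter_upwards [eventually_gt_atTop (0:ℝ)] with s hs
    have hpair : Continuous (fun t : ℝ =>
        ((1 - ∫ ω, r s (Z0 ω - t) ∂P, 1 - ∫ ω, r s (Z1 ω - t) ∂P) : ℝ × ℝ)) :=
      (hFcont Z0 hZ0 s hs).prodMk (hFcont Z1 hZ1 s hs)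
    exact (hc.comp_continuous hpair fun t =>
      ⟨hFmem Z0 hZ0 s hs t, hFmem Z1 hZ1 s hs t⟩).aestronglyMeasurable
  · filter_upwards [eventually_gt_atTop (0:ℝ)] with s hs
    refine Eventually.of_forall fun t => ?_
    exact hC (1 - ∫ ω, r s (Z0 ω - t) ∂P, 1 - ∫ ω, r s (Z1 ω - t) ∂P)
      ⟨hFmem Z0 hZ0 s hs t, hFmem Z1 hZ1 s hs t⟩
  · exact integrable_const C
  · filter_upwards [hbad] with t ht
    have h0 := stmt12_inner P hZ0 hrcont hmem hH ht.1
    have h1 := stmt12_inner P hZ1 hrcont hmem hH ht.2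
    have hpt : ((P {ω | Z0 ω ≤ t}).toReal, (P {ω | Z1 ω ≤ t}).toReal)
        ∈ Icc (0:ℝ) 1 ×ˢ Icc (0:ℝ) 1 := ⟨hCDFmem Z0 t, hCDFmem Z1 t⟩
    have hpair : Tendsto (fun s =>
        ((1 - ∫ ω, r s (Z0 ω - t) ∂P, 1 - ∫ ω, r s (Z1 ω - t) ∂P) : ℝ × ℝ)) atTop
        (nhdsWithin ((P {ω | Z0 ω ≤ t}).toReal, (P {ω | Z1 ω ≤ t}).toReal)
          (Icc (0:ℝ) 1 ×ˢ Icc (0:ℝ) 1)) := by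
      apply tendsto_nhdsWithin_of_tendsto_nhds_of_eventually_within _ (h0.prodMk_nhds h1)
      filter_upwards [eventually_gt_atTop (0:ℝ)] with s hs
      exact ⟨hFmem Z0 hZ0 s hs t, hFmem Z1 hZ1 s hs t⟩
    exact ((hc _ hpt).tendsto).comp hpair
end

section
/- Let Z0, Z1 be real-valued random variables with CDFs F_{Z0}, F_{Z1}, let μ be a Borel probability measure on ℝ with left-continuous CDF F̃_μ, and let c : [0,1]² → ℝ be continuous. Then ∫_ℝ c(F_{Z0}(t), F_{Z1}(t)) μ(dt) = ∫_0^1 c(F_{F̃_μ(Z0)}(q), F_{F̃_μ(Z1)}(q)) dq, where F_{F̃_μ(Z_k)} denotes the CDF of the random variable F̃_μ(Z_k). Moreover, if μ is atomless, then F̃_μ may be replaced by F_μ: ∫_ℝ c(F_{Z0}(t), F_{Z1}(t)) μ(dt) = ∫_0^1 c(F_{F_μ(Z0)}(q), F_{F_μ(Z1)}(q)) dq. -/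
open MeasureTheory Set

/-- The cumulative distribution function of a Borel probability measure on `ℝ`. -/
noncomputable def mcdf (ν : MeasureTheory.Measure ℝ) (t : ℝ) : ℝ := (ν (Set.Iic t)).toReal

/-- The left-continuous version of the CDF of `ν`: `F̃_ν(t) = lim_{τ→t⁻} F_ν(τ) = ν((-∞,t))`. -/
noncomputable def mlcdf (ν : MeasureTheory.Measure ℝ) (t : ℝ) : ℝ := (ν (Set.Iio t)).toReal

open ProbabilityTheory Filter Topology
set_option linter.unusedSectionVars false
set_option linter.unusedVariables false

noncomputable def qf (μ : MeasureTheory.Measure ℝ) (q : ℝ) : ℝ :=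
  sInf {t | q ≤ ProbabilityTheory.cdf μ t}

variable (μ : MeasureTheory.Measure ℝ) [IsProbabilityMeasure μ]

lemma qf_set_nonempty {q : ℝ} (hq : q < 1) : {t | q ≤ cdf μ t}.Nonempty := by
  obtain ⟨t, ht⟩ := ((tendsto_cdf_atTop μ).eventually (eventually_gt_nhds hq)).exists
  exact ⟨t, ht.le⟩

lemma qf_set_bddBelow {q : ℝ} (hq : 0 < q) : BddBelow {t | q ≤ cdf μ t} := by
  obtain ⟨t0, ht0⟩ := ((tendsto_cdf_atBot μ).eventually (eventually_lt_nhds hq)).exists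
  refine ⟨t0, fun t ht => ?_⟩
  by_contra hlt
  push_neg at hlt
  exact absurd (le_trans ht (monotone_cdf μ hlt.le)) (not_le.2 ht0)

lemma le_cdf_qf {q : ℝ} (hq : q ∈ Ioo (0:ℝ) 1) : q ≤ cdf μ (qf μ q) := by
  set S := {t | q ≤ cdf μ t} with hS
  have hne := qf_set_nonempty μ hq.2
  have hbd := qf_set_bddBelow μ hq.1
  have hcl : qf μ q ∈ closure S := csInf_mem_closure hne hbd
  have hS_Ici : S ⊆ Ici (qf μ q) := fun t ht => csInf_le hbd ht
  have hnb : (𝓝[S] (qf μ q)).NeBot := mem_closure_iff_nhdsWithin_neBot.1 hcl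
  have hct : ContinuousWithinAt (cdf μ) S (qf μ q) :=
    ((cdf μ).right_continuous _).mono hS_Ici
  exact ge_of_tendsto hct (eventually_nhdsWithin_of_forall (fun t ht => ht))

lemma qf_le_iff {q t : ℝ} (hq : q ∈ Ioo (0:ℝ) 1) : qf μ q ≤ t ↔ q ≤ cdf μ t :=
  ⟨fun h => (le_cdf_qf μ hq).trans (monotone_cdf μ h),
   fun h => csInf_le (qf_set_bddBelow μ hq.1) h⟩

lemma qf_monotoneOn : MonotoneOn (qf μ) (Ioo (0:ℝ) 1) := fun q hq q' hq' h =>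
  csInf_le_csInf (qf_set_bddBelow μ hq.1) (qf_set_nonempty μ hq'.2)
    (fun t ht => le_trans h ht)

lemma volume_Ioo_inter_Iic {c : ℝ} (h0 : 0 ≤ c) (h1 : c ≤ 1) :
    volume (Ioo (0:ℝ) 1 ∩ Iic c) = ENNReal.ofReal c := by
  apply le_antisymm
  · calc volume (Ioo (0:ℝ) 1 ∩ Iic c) ≤ volume (Ioc (0:ℝ) c) :=
        measure_mono (fun x hx => ⟨hx.1.1, hx.2⟩)
      _ = ENNReal.ofReal c := by rw [Real.volume_Ioc, sub_zero]
  · calc ENNReal.ofReal c = volume (Ioo (0:ℝ) c) := by rw [Real.volume_Ioo, sub_zero]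
      _ ≤ volume (Ioo (0:ℝ) 1 ∩ Iic c) :=
        measure_mono (fun x hx => ⟨⟨hx.1, lt_of_lt_of_le hx.2 h1⟩, hx.2.le⟩)

lemma map_qf : Measure.map (qf μ) (volume.restrict (Ioo (0:ℝ) 1)) = μ := by
  have hmeas : AEMeasurable (qf μ) (volume.restrict (Ioo (0:ℝ) 1)) :=
    aemeasurable_restrict_of_monotoneOn measurableSet_Ioo (qf_monotoneOn μ)
  symm
  refine Measure.ext_of_Iic μ _ (fun a => ?_)
  rw [Measure.map_apply_of_aemeasurable hmeas measurableSet_Iic,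
    Measure.restrict_apply' measurableSet_Ioo]
  have hset : (qf μ ⁻¹' Iic a) ∩ Ioo (0:ℝ) 1 = Ioo (0:ℝ) 1 ∩ Iic (cdf μ a) := by
    ext q
    simp only [mem_inter_iff, mem_preimage, mem_Iic]
    constructor
    · rintro ⟨h1, h2⟩; exact ⟨h2, (qf_le_iff μ h2).1 h1⟩
    · rintro ⟨h1, h2⟩; exact ⟨(qf_le_iff μ h1).2 h2, h1⟩
  rw [hset, volume_Ioo_inter_Iic (cdf_nonneg μ a) (cdf_le_one μ a), ofReal_cdf]

lemma measure_Iio_qf_le {q : ℝ} (hq : q ∈ Ioo (0:ℝ) 1) :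
    μ (Iio (qf μ q)) ≤ ENNReal.ofReal q := by
  set z := qf μ q with hz
  have hU : Iio z = ⋃ n : ℕ, Iic (z - ((n:ℝ)+1)⁻¹) := by
    ext x
    simp only [mem_Iio, mem_iUnion, mem_Iic]
    constructor
    · intro hx
      have hzx : 0 < z - x := sub_pos.2 hx
      obtain ⟨n, hn⟩ := exists_nat_gt (z - x)⁻¹
      have h1 : (z - x)⁻¹ < (n:ℝ) + 1 := hn.trans (lt_add_one _)
      have h2 : ((n:ℝ)+1)⁻¹ < z - x := (inv_lt_comm₀ (by positivity) hzx).2 h1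
      exact ⟨n, by linarith⟩
    · rintro ⟨n, hn⟩
      have : (0:ℝ) < ((n:ℝ)+1)⁻¹ := by positivity
      linarith
  have hmono : Monotone (fun n : ℕ => Iic (z - ((n:ℝ)+1)⁻¹)) := by
    intro m n hmn
    apply Iic_subset_Iic.2
    have : ((n:ℝ)+1)⁻¹ ≤ ((m:ℝ)+1)⁻¹ := by
      apply inv_anti₀ (by positivity)
      have := (Nat.cast_le (α := ℝ)).2 hmn
      linarith
    linarith
  rw [hU, hmono.directed_le.measure_iUnion]
  refine iSup_le (fun n => ?_)
  have hlt : z - ((n:ℝ)+1)⁻¹ < z := by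
    have : (0:ℝ) < ((n:ℝ)+1)⁻¹ := by positivity
    linarith
  have hnot : ¬ q ≤ cdf μ (z - ((n:ℝ)+1)⁻¹) := by
    intro h
    exact absurd (csInf_le (qf_set_bddBelow μ hq.1) h) (not_le.2 hlt)
  rw [← ofReal_cdf μ]
  exact ENNReal.ofReal_le_ofReal (le_of_lt (not_le.1 hnot))

lemma bad_countable :
    Set.Countable {q : ℝ | q ∈ Ioo (0:ℝ) 1 ∧ ∃ x, qf μ q < x ∧ (μ (Iio x)).toReal ≤ q} := by
  refine (Set.countable_range (fun r : ℚ => cdf μ (r:ℝ))).mono ?_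
  rintro q ⟨hq, x, hx1, hx2⟩
  obtain ⟨r, hr1, hr2⟩ := exists_rat_btwn hx1
  refine ⟨r, ?_⟩
  apply le_antisymm
  · have h1 : μ (Iic (r:ℝ)) ≤ μ (Iio x) := measure_mono (fun y hy => lt_of_le_of_lt hy hr2)
    calc cdf μ r = (μ (Iic (r:ℝ))).toReal := cdf_eq_real μ _
      _ ≤ (μ (Iio x)).toReal := ENNReal.toReal_mono (measure_ne_top μ _) h1
      _ ≤ q := hx2
  · exact (qf_le_iff μ hq).1 hr1.le

lemma mlcdf_set_eq {q : ℝ} (hq : q ∈ Ioo (0:ℝ) 1)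
    (hb : ¬ ∃ x, qf μ q < x ∧ (μ (Iio x)).toReal ≤ q) :
    {x : ℝ | (μ (Iio x)).toReal ≤ q} = Iic (qf μ q) := by
  ext x
  simp only [mem_setOf_eq, mem_Iic]
  constructor
  · intro hx
    by_contra h
    push_neg at h
    exact hb ⟨x, h, hx⟩
  · intro hx
    have h1 : μ (Iio x) ≤ μ (Iio (qf μ q)) := measure_mono (Iio_subset_Iio hx)
    calc (μ (Iio x)).toReal ≤ (ENNReal.ofReal q).toReal :=
        ENNReal.toReal_mono (by simp) (h1.trans (measure_Iio_qf_le μ hq))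
      _ = q := ENNReal.toReal_ofReal hq.1.le

lemma meas_comp {u v : ℝ → ℝ} (hu : Measurable u) (hv : Measurable v)
    (hu' : ∀ t, u t ∈ Icc (0:ℝ) 1) (hv' : ∀ t, v t ∈ Icc (0:ℝ) 1)
    {c : ℝ → ℝ → ℝ}
    (hc : ContinuousOn (fun p : ℝ × ℝ => c p.1 p.2) (Icc (0:ℝ) 1 ×ˢ Icc (0:ℝ) 1)) :
    Measurable fun t => c (u t) (v t) := by
  have h1 : Measurable fun t =>
      (⟨(u t, v t), ⟨hu' t, hv' t⟩⟩ : (Icc (0:ℝ) 1 ×ˢ Icc (0:ℝ) 1 : Set (ℝ×ℝ))) :=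
    (hu.prodMk hv).subtype_mk
  exact (hc.restrict.measurable).comp h1

lemma main_eq {Ω : Type*} [MeasurableSpace Ω] (P : MeasureTheory.Measure Ω)
    [MeasureTheory.IsProbabilityMeasure P]
    (Z0 Z1 : Ω → ℝ)
    (μ : MeasureTheory.Measure ℝ) [MeasureTheory.IsProbabilityMeasure μ]
    (c : ℝ → ℝ → ℝ)
    (hc : ContinuousOn (fun p : ℝ × ℝ => c p.1 p.2)
      (Set.Icc (0 : ℝ) 1 ×ˢ Set.Icc (0 : ℝ) 1)) :
    ∫ t, c ((P {ω | Z0 ω ≤ t}).toReal) ((P {ω | Z1 ω ≤ t}).toReal) ∂μ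
      = ∫ q in (0 : ℝ)..1,
          c ((P {ω | mlcdf μ (Z0 ω) ≤ q}).toReal) ((P {ω | mlcdf μ (Z1 ω) ≤ q}).toReal) := by
  have measF : ∀ Z : Ω → ℝ, Measurable fun t => (P {ω | Z ω ≤ t}).toReal := by
    intro Z
    refine Monotone.measurable (fun t t' htt' => ?_)
    exact ENNReal.toReal_mono (measure_ne_top _ _)
      (measure_mono (fun ω h => le_trans h htt'))
  have memIcc : ∀ (s : Set Ω), (P s).toReal ∈ Icc (0:ℝ) 1 := by
    intro s
    refine ⟨ENNReal.toReal_nonneg, ?_⟩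
    have h1 : P s ≤ 1 := prob_le_one
    exact ENNReal.toReal_le_of_le_ofReal zero_le_one (by simpa using h1)
  have hg : Measurable fun t => c ((P {ω | Z0 ω ≤ t}).toReal) ((P {ω | Z1 ω ≤ t}).toReal) :=
    meas_comp (measF Z0) (measF Z1) (fun t => memIcc _) (fun t => memIcc _) hc
  have hmeasQ : AEMeasurable (qf μ) (volume.restrict (Ioo (0:ℝ) 1)) :=
    aemeasurable_restrict_of_monotoneOn measurableSet_Ioo (qf_monotoneOn μ)
  set B := {q : ℝ | q ∈ Ioo (0:ℝ) 1 ∧ ∃ x, qf μ q < x ∧ (μ (Iio x)).toReal ≤ q} with hB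
  have hBzero : volume B = 0 := (bad_countable μ).measure_zero _
  have hae : ∀ᵐ q ∂(volume.restrict (Ioo (0:ℝ) 1)),
      c ((P {ω | Z0 ω ≤ qf μ q}).toReal) ((P {ω | Z1 ω ≤ qf μ q}).toReal)
        = c ((P {ω | mlcdf μ (Z0 ω) ≤ q}).toReal) ((P {ω | mlcdf μ (Z1 ω) ≤ q}).toReal) := by
    have h1 : ∀ᵐ q ∂(volume.restrict (Ioo (0:ℝ) 1)), q ∉ B :=
      ae_restrict_of_ae (measure_eq_zero_iff_ae_notMem.mp hBzero)
    have h2 : ∀ᵐ q ∂(volume.restrict (Ioo (0:ℝ) 1)), q ∈ Ioo (0:ℝ) 1 :=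
      ae_restrict_mem measurableSet_Ioo
    filter_upwards [h1, h2] with q hq1 hq2
    have hnb : ¬ ∃ x, qf μ q < x ∧ (μ (Iio x)).toReal ≤ q := fun hx => hq1 ⟨hq2, hx⟩
    have hset := mlcdf_set_eq μ hq2 hnb
    have hZset : ∀ Z : Ω → ℝ, {ω | Z ω ≤ qf μ q} = {ω | mlcdf μ (Z ω) ≤ q} := by
      intro Z
      ext ω
      have := Set.ext_iff.1 hset (Z ω)
      simp only [mem_setOf_eq, mem_Iic] at this
      simpa [mlcdf, mem_setOf_eq] using this.symm
    rw [hZset Z0, hZset Z1]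
  calc ∫ t, c ((P {ω | Z0 ω ≤ t}).toReal) ((P {ω | Z1 ω ≤ t}).toReal) ∂μ
      = ∫ t, c ((P {ω | Z0 ω ≤ t}).toReal) ((P {ω | Z1 ω ≤ t}).toReal)
          ∂(Measure.map (qf μ) (volume.restrict (Ioo (0:ℝ) 1))) := by rw [map_qf μ]
    _ = ∫ q in Ioo (0:ℝ) 1,
          c ((P {ω | Z0 ω ≤ qf μ q}).toReal) ((P {ω | Z1 ω ≤ qf μ q}).toReal) :=
        integral_map hmeasQ hg.aestronglyMeasurable
    _ = ∫ q in Ioo (0:ℝ) 1,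
          c ((P {ω | mlcdf μ (Z0 ω) ≤ q}).toReal) ((P {ω | mlcdf μ (Z1 ω) ≤ q}).toReal) :=
        integral_congr_ae hae
    _ = ∫ q in (0:ℝ)..1,
          c ((P {ω | mlcdf μ (Z0 ω) ≤ q}).toReal) ((P {ω | mlcdf μ (Z1 ω) ≤ q}).toReal) := by
        rw [intervalIntegral.integral_of_le zero_le_one, integral_Ioc_eq_integral_Ioo]

/-- For continuous `c : [0,1]² → ℝ`,
`∫ c(F_{Z0}(t), F_{Z1}(t)) μ(dt) = ∫_0^1 c(F_{F̃_μ(Z0)}(q), F_{F̃_μ(Z1)}(q)) dq`,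
and if `μ` is atomless, the same holds with `F_μ` in place of `F̃_μ`. -/
theorem stmt_15 {Ω : Type*} [MeasurableSpace Ω] (P : MeasureTheory.Measure Ω)
    [MeasureTheory.IsProbabilityMeasure P]
    (Z0 Z1 : Ω → ℝ) (hZ0 : Measurable Z0) (hZ1 : Measurable Z1)
    (μ : MeasureTheory.Measure ℝ) [MeasureTheory.IsProbabilityMeasure μ]
    (c : ℝ → ℝ → ℝ)
    (hc : ContinuousOn (fun p : ℝ × ℝ => c p.1 p.2)
      (Set.Icc (0 : ℝ) 1 ×ˢ Set.Icc (0 : ℝ) 1)) :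
    (∫ t, c ((P {ω | Z0 ω ≤ t}).toReal) ((P {ω | Z1 ω ≤ t}).toReal) ∂μ
      = ∫ q in (0 : ℝ)..1,
          c ((P {ω | mlcdf μ (Z0 ω) ≤ q}).toReal) ((P {ω | mlcdf μ (Z1 ω) ≤ q}).toReal))
    ∧ ((∀ x : ℝ, μ {x} = 0) →
        ∫ t, c ((P {ω | Z0 ω ≤ t}).toReal) ((P {ω | Z1 ω ≤ t}).toReal) ∂μ
          = ∫ q in (0 : ℝ)..1,
              c ((P {ω | mcdf μ (Z0 ω) ≤ q}).toReal)
                ((P {ω | mcdf μ (Z1 ω) ≤ q}).toReal)) := by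
  have key := main_eq P Z0 Z1 μ c hc
  refine ⟨key, fun hat => ?_⟩
  have hcdf : mcdf μ = mlcdf μ := by
    funext t
    unfold mcdf mlcdf
    have : Iic t = Iio t ∪ {t} := (Set.Iio_union_right).symm
    rw [this, measure_union (by simp) (measurableSet_singleton t), hat t, add_zero]
  rw [hcdf]
  exact key
end

section
/- Let Z0, Z1 be real-valued random variables with CDFs F_{Z0}, F_{Z1}, and let μ be a Borel probability measure on ℝ with left-continuous CDF F̃_μ. Then ∫_ℝ |F_{Z0}(t) − F_{Z1}(t)| μ(dt) = ∫_0^1 |F_{F̃_μ(Z0)}(q) − F_{F̃_μ(Z1)}(q)| dq = W_1(P_{F̃_μ(Z0)}, P_{F̃_μ(Z1)}), where P_{F̃_μ(Z_k)} denotes the law of F̃_μ(Z_k). If μ is atomless, the right-hand side equals W_1(P_{F_μ(Z0)}, P_{F_μ(Z1)}). -/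
open MeasureTheory Set

/-- `γ` is a coupling of `μ` and `ν`. -/
def IsCoupling (γ : MeasureTheory.Measure (ℝ × ℝ)) (μ ν : MeasureTheory.Measure ℝ) : Prop :=
  γ.map Prod.fst = μ ∧ γ.map Prod.snd = ν

/-- The Wasserstein-1 distance between two Borel probability measures on `ℝ`. -/
noncomputable def W1 (μ ν : MeasureTheory.Measure ℝ) : ℝ :=
  sInf { r : ℝ | ∃ γ : MeasureTheory.Measure (ℝ × ℝ),
    MeasureTheory.IsProbabilityMeasure γ ∧ IsCoupling γ μ ν ∧ r = ∫ p, |p.1 - p.2| ∂γ }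

open Filter Topology
section basics
variable (ν : Measure ℝ) [IsProbabilityMeasure ν]

lemma mcdf_eq_cdf : mcdf ν = ProbabilityTheory.cdf ν := by
  ext t; rw [mcdf, ProbabilityTheory.cdf_eq_real, measureReal_def]

lemma mcdf_mono : Monotone (mcdf ν) := by
  rw [mcdf_eq_cdf]; exact ProbabilityTheory.monotone_cdf ν

lemma mcdf_nonneg (t : ℝ) : 0 ≤ mcdf ν t := ENNReal.toReal_nonneg

lemma mcdf_le_one (t : ℝ) : mcdf ν t ≤ 1 := by
  rw [mcdf_eq_cdf]; exact ProbabilityTheory.cdf_le_one ν t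

lemma mcdf_measurable : Measurable (mcdf ν) := (mcdf_mono ν).measurable

lemma ofReal_mcdf (t : ℝ) : ENNReal.ofReal (mcdf ν t) = ν (Iic t) := by
  rw [mcdf, ENNReal.ofReal_toReal (measure_ne_top _ _)]

lemma mlcdf_mono : Monotone (mlcdf ν) := fun a b hab =>
  ENNReal.toReal_mono (measure_ne_top _ _) (measure_mono (Iio_subset_Iio hab))

lemma mlcdf_measurable : Measurable (mlcdf ν) := (mlcdf_mono ν).measurable

lemma mlcdf_nonneg (t : ℝ) : 0 ≤ mlcdf ν t := ENNReal.toReal_nonneg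

lemma mlcdf_le_one (t : ℝ) : mlcdf ν t ≤ 1 := by
  rw [mlcdf]
  exact ENNReal.toReal_le_of_le_ofReal one_pos.le (by simpa using prob_le_one)

lemma mcdf_rightCont (t : ℝ) : ContinuousWithinAt (mcdf ν) (Ici t) t := by
  rw [mcdf_eq_cdf]; exact (ProbabilityTheory.cdf ν).right_continuous t

end basics

/-- Quantile function. -/
noncomputable def mq (ν : Measure ℝ) (u : ℝ) : ℝ := sInf {t | u ≤ mcdf ν t}

section quantile
variable (ν : Measure ℝ) [IsProbabilityMeasure ν]

lemma mq_set_nonempty {u : ℝ} (hu : u < 1) : {t | u ≤ mcdf ν t}.Nonempty := by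
  have h := ProbabilityTheory.tendsto_cdf_atTop (μ := ν)
  obtain ⟨t, ht⟩ := (h.eventually (eventually_ge_nhds hu)).exists
  exact ⟨t, by rwa [mem_setOf_eq, mcdf_eq_cdf]⟩

lemma mq_set_bddBelow {u : ℝ} (hu : 0 < u) : BddBelow {t | u ≤ mcdf ν t} := by
  have h := ProbabilityTheory.tendsto_cdf_atBot (μ := ν)
  obtain ⟨t0, ht0⟩ := (h.eventually (eventually_lt_nhds hu)).exists
  rw [← mcdf_eq_cdf] at ht0
  refine ⟨t0, fun t ht => ?_⟩
  by_contra hc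
  push_neg at hc
  exact absurd (le_trans ht (mcdf_mono ν hc.le)) (not_le.mpr ht0)

lemma mq_set_isClosed (u : ℝ) : IsClosed {t | u ≤ mcdf ν t} := by
  rw [← isOpen_compl_iff]
  rw [isOpen_iff_mem_nhds]
  intro t ht
  simp only [mem_compl_iff, mem_setOf_eq, not_le] at ht
  rw [← nhdsLE_sup_nhdsGE, mem_sup]
  constructor
  · exact mem_of_superset self_mem_nhdsWithin
      (fun s hs => by simpa using lt_of_le_of_lt (mcdf_mono ν hs) ht)
  · have := (mcdf_rightCont ν t).eventually (eventually_lt_nhds ht)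
    exact this.mono (fun s hs => by simpa using hs)

lemma mq_mem {u : ℝ} (hu : u ∈ Ioo (0:ℝ) 1) : u ≤ mcdf ν (mq ν u) :=
  (mq_set_isClosed ν u).csInf_mem (mq_set_nonempty ν hu.2) (mq_set_bddBelow ν hu.1)

lemma mq_galois {u : ℝ} (hu : u ∈ Ioo (0:ℝ) 1) (t : ℝ) :
    mq ν u ≤ t ↔ u ≤ mcdf ν t := by
  constructor
  · exact fun h => le_trans (mq_mem ν hu) (mcdf_mono ν h)
  · exact fun h => csInf_le (mq_set_bddBelow ν hu.1) h

end quantile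

/-- The quantile function, set to 0 outside `(0,1)` to make it measurable. -/
noncomputable def mqI (ν : Measure ℝ) : ℝ → ℝ := (Set.Ioo (0:ℝ) 1).indicator (mq ν)

section quantile2
variable (ν : Measure ℝ) [IsProbabilityMeasure ν]

lemma mqI_eq {u : ℝ} (hu : u ∈ Ioo (0:ℝ) 1) : mqI ν u = mq ν u := indicator_of_mem hu _

lemma mqI_measurable : Measurable (mqI ν) := by
  apply measurable_of_Iic
  intro c
  by_cases hc : (0:ℝ) ≤ c
  · have h : mqI ν ⁻¹' Iic c = (Ioo (0:ℝ) 1 ∩ Iic (mcdf ν c)) ∪ (Ioo (0:ℝ) 1)ᶜ := by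
      ext u
      by_cases hu : u ∈ Ioo (0:ℝ) 1
      · simp only [mem_preimage, mem_Iic, mqI_eq ν hu, mem_union, mem_inter_iff, hu,
          mem_compl_iff, true_and, not_true, or_false, mq_galois ν hu c]
      · simp only [mem_preimage, mem_Iic, mqI, indicator_of_notMem hu, hc, mem_union,
          mem_compl_iff, hu, not_false_iff, or_true]
    rw [h]
    exact ((measurableSet_Ioo.inter measurableSet_Iic).union measurableSet_Ioo.compl)
  · have h : mqI ν ⁻¹' Iic c = Ioo (0:ℝ) 1 ∩ Iic (mcdf ν c) := by
      ext u
      by_cases hu : u ∈ Ioo (0:ℝ) 1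
      · simp only [mem_preimage, mem_Iic, mqI_eq ν hu, mem_inter_iff, hu, true_and,
          mq_galois ν hu c]
      · simp only [mem_preimage, mem_Iic, mqI, indicator_of_notMem hu, hc, mem_inter_iff, hu,
          false_and]
    rw [h]
    exact measurableSet_Ioo.inter measurableSet_Iic
end quantile2

instance : IsProbabilityMeasure (volume.restrict (Ioo (0:ℝ) 1)) :=
  ⟨by simp [Real.volume_Ioo]⟩

section quantile3
variable (ν : Measure ℝ) [IsProbabilityMeasure ν]

lemma map_mqI : (volume.restrict (Ioo (0:ℝ) 1)).map (mqI ν) = ν := by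
  have : IsProbabilityMeasure ((volume.restrict (Ioo (0:ℝ) 1)).map (mqI ν)) :=
    Measure.isProbabilityMeasure_map (mqI_measurable ν).aemeasurable
  apply Measure.ext_of_Iic _ ν
  intro t
  rw [Measure.map_apply (mqI_measurable ν) measurableSet_Iic, Measure.restrict_apply']
  swap; · exact measurableSet_Ioo
  have hset : mqI ν ⁻¹' Iic t ∩ Ioo 0 1 = Ioo (0:ℝ) 1 ∩ Iic (mcdf ν t) := by
    ext u
    simp only [mem_inter_iff, mem_preimage, mem_Iic]
    constructor
    · rintro ⟨h, hu⟩
      exact ⟨hu, (mq_galois ν hu t).mp (by rwa [mqI_eq ν hu] at h)⟩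
    · rintro ⟨hu, h⟩
      exact ⟨by rw [mqI_eq ν hu]; exact (mq_galois ν hu t).mpr h, hu⟩
  rw [hset, ← ofReal_mcdf]
  rcases lt_or_ge (mcdf ν t) 1 with h1 | h1
  · have : Ioo (0:ℝ) 1 ∩ Iic (mcdf ν t) = Ioc 0 (mcdf ν t) := by
      ext u
      simp only [mem_inter_iff, mem_Ioo, mem_Iic, mem_Ioc]
      exact ⟨fun ⟨⟨h0, _⟩, hle⟩ => ⟨h0, hle⟩, fun ⟨h0, hle⟩ => ⟨⟨h0, lt_of_le_of_lt hle h1⟩, hle⟩⟩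
    rw [this, Real.volume_Ioc, sub_zero]
  · have h1' : mcdf ν t = 1 := le_antisymm (mcdf_le_one ν t) h1
    have : Ioo (0:ℝ) 1 ∩ Iic (mcdf ν t) = Ioo 0 1 := by
      rw [h1']
      exact inter_eq_left.mpr (fun u hu => le_of_lt hu.2)
    rw [this, Real.volume_Ioo, h1']
    norm_num

lemma mlcdf_le_of_le_mq {u : ℝ} (hu : u ∈ Ioo (0:ℝ) 1) {z : ℝ} (hz : z ≤ mq ν u) :
    mlcdf ν z ≤ u := by
  have key : ∀ t, t < mq ν u → ν (Iic t) ≤ ENNReal.ofReal u := by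
    intro t ht
    have h2 : ¬ u ≤ mcdf ν t := fun h => absurd ((mq_galois ν hu t).mpr h) (not_le.mpr ht)
    rw [← ofReal_mcdf]
    exact ENNReal.ofReal_le_ofReal (le_of_lt (not_le.mp h2))
  have hsub : Iio z ⊆ ⋃ n : ℕ, Iic (z - ((n:ℝ)+1)⁻¹) := by
    intro y hy
    obtain ⟨n, hn⟩ := exists_nat_one_div_lt (K := ℝ) (sub_pos.mpr hy)
    refine mem_iUnion.mpr ⟨n, ?_⟩
    simp only [mem_Iic]
    rw [one_div] at hn
    linarith
  have hmono : Monotone (fun n : ℕ => Iic (z - ((n:ℝ)+1)⁻¹)) := by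
    intro m n hmn
    apply Iic_subset_Iic.mpr
    have hc : (m:ℝ) ≤ (n:ℝ) := Nat.cast_le.mpr hmn
    have : ((n:ℝ)+1)⁻¹ ≤ ((m:ℝ)+1)⁻¹ := by
      apply inv_anti₀ (by positivity)
      linarith
    linarith
  have : ν (Iio z) ≤ ENNReal.ofReal u := by
    calc ν (Iio z) ≤ ν (⋃ n : ℕ, Iic (z - ((n:ℝ)+1)⁻¹)) := measure_mono hsub
      _ = ⨆ n : ℕ, ν (Iic (z - ((n:ℝ)+1)⁻¹)) :=
          hmono.directed_le.measure_iUnion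
      _ ≤ ENNReal.ofReal u := by
          apply iSup_le
          intro n
          apply key
          have : (0:ℝ) < ((n:ℝ)+1)⁻¹ := by positivity
          linarith [hz]
  rw [mlcdf]
  exact ENNReal.toReal_le_of_le_ofReal hu.1.le this

lemma le_mlcdf_of_mq_lt {u : ℝ} (hu : u ∈ Ioo (0:ℝ) 1) {z : ℝ} (hz : mq ν u < z) :
    u ≤ mlcdf ν z := by
  have h1 : ENNReal.ofReal u ≤ ν (Iic (mq ν u)) := by
    rw [← ofReal_mcdf]
    exact ENNReal.ofReal_le_ofReal (mq_mem ν hu)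
  have h2 : ν (Iic (mq ν u)) ≤ ν (Iio z) :=
    measure_mono (fun y hy => lt_of_le_of_lt hy hz)
  rw [mlcdf]
  exact (ENNReal.ofReal_le_iff_le_toReal (measure_ne_top _ _)).mp (le_trans h1 h2)

lemma mcdf_map_mlcdf {lam : Measure ℝ} [IsProbabilityMeasure lam] {u : ℝ}
    (hu : u ∈ Ioo (0:ℝ) 1) (h0 : (lam.map (mlcdf ν)) {u} = 0) :
    mcdf (lam.map (mlcdf ν)) u = mcdf lam (mq ν u) := by
  rw [mcdf, mcdf, Measure.map_apply (mlcdf_measurable ν) measurableSet_Iic]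
  congr 1
  have hsub : Iic (mq ν u) ⊆ mlcdf ν ⁻¹' Iic u := fun z hz => mlcdf_le_of_le_mq ν hu hz
  have h0' : lam (mlcdf ν ⁻¹' {u}) = 0 := by
    rwa [Measure.map_apply (mlcdf_measurable ν) (measurableSet_singleton u)] at h0
  apply le_antisymm
  · have hsub2 : mlcdf ν ⁻¹' Iic u ⊆ Iic (mq ν u) ∪ mlcdf ν ⁻¹' {u} := by
      intro z hz
      by_cases h : z ≤ mq ν u
      · exact Or.inl h
      · exact Or.inr (le_antisymm hz (le_mlcdf_of_mq_lt ν hu (not_le.mp h)))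
    calc lam (mlcdf ν ⁻¹' Iic u) ≤ lam (Iic (mq ν u)) + lam (mlcdf ν ⁻¹' {u}) :=
          le_trans (measure_mono hsub2) (measure_union_le _ _)
      _ = lam (Iic (mq ν u)) := by rw [h0', add_zero]
  · exact measure_mono hsub

end quantile3

lemma countable_atoms (ρ : Measure ℝ) [IsProbabilityMeasure ρ] :
    volume {u : ℝ | ρ {u} ≠ 0} = 0 := by
  have h : Set.Countable {u : ℝ | 0 < ρ {u}} := by
    have := MeasureTheory.Measure.countable_meas_level_set_pos (μ := ρ) (g := id) measurable_id
    simpa [Set.setOf_eq_eq_singleton] using this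
  have heq : {u : ℝ | ρ {u} ≠ 0} = {u : ℝ | 0 < ρ {u}} := by
    ext u; simp [pos_iff_ne_zero]
  rw [heq]
  exact h.measure_zero _

lemma lemB (μ lam0 lam1 : Measure ℝ) [IsProbabilityMeasure μ] [IsProbabilityMeasure lam0]
    [IsProbabilityMeasure lam1] :
    ∫ t, |mcdf lam0 t - mcdf lam1 t| ∂μ
      = ∫ u in Ioo (0:ℝ) 1, |mcdf (lam0.map (mlcdf μ)) u - mcdf (lam1.map (mlcdf μ)) u| := by
  set ν0 := lam0.map (mlcdf μ) with hν0
  set ν1 := lam1.map (mlcdf μ) with hν1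
  haveI : IsProbabilityMeasure ν0 := Measure.isProbabilityMeasure_map (mlcdf_measurable μ).aemeasurable
  haveI : IsProbabilityMeasure ν1 := Measure.isProbabilityMeasure_map (mlcdf_measurable μ).aemeasurable
  have hf : Measurable (fun t => |mcdf lam0 t - mcdf lam1 t|) :=
    ((mcdf_measurable lam0).sub (mcdf_measurable lam1)).abs
  have step1 : ∫ t, |mcdf lam0 t - mcdf lam1 t| ∂μ
      = ∫ u in Ioo (0:ℝ) 1, |mcdf lam0 (mqI μ u) - mcdf lam1 (mqI μ u)| := by
    conv_lhs => rw [← map_mqI μ]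
    exact integral_map (mqI_measurable μ).aemeasurable
      (by rw [map_mqI μ]; exact hf.aestronglyMeasurable)
  have hae : ∀ᵐ u ∂(volume.restrict (Ioo (0:ℝ) 1)),
      |mcdf lam0 (mqI μ u) - mcdf lam1 (mqI μ u)| = |mcdf ν0 u - mcdf ν1 u| := by
    have h0 : ∀ᵐ u ∂(volume.restrict (Ioo (0:ℝ) 1)), ν0 {u} = 0 :=
      ae_restrict_of_ae (ae_iff.mpr (by simpa using countable_atoms ν0))
    have h1 : ∀ᵐ u ∂(volume.restrict (Ioo (0:ℝ) 1)), ν1 {u} = 0 :=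
      ae_restrict_of_ae (ae_iff.mpr (by simpa using countable_atoms ν1))
    have hm : ∀ᵐ u ∂(volume.restrict (Ioo (0:ℝ) 1)), u ∈ Ioo (0:ℝ) 1 :=
      ae_restrict_mem measurableSet_Ioo
    filter_upwards [h0, h1, hm] with u h0u h1u hu
    rw [mqI_eq μ hu, ← mcdf_map_mlcdf μ hu h0u, ← mcdf_map_mlcdf μ hu h1u]
  rw [step1]
  exact integral_congr_ae hae

lemma vol_Ioc_inter {m M : ℝ} (h0 : 0 ≤ m) (hm : m ≤ M) (h1 : M ≤ 1) :
    volume (Ioc m M ∩ Ioo (0:ℝ) 1) = ENNReal.ofReal (M - m) := by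
  rcases lt_or_ge M 1 with hM | hM
  · have : Ioc m M ∩ Ioo (0:ℝ) 1 = Ioc m M := by
      apply inter_eq_left.mpr
      intro u hu
      exact ⟨lt_of_le_of_lt h0 hu.1, lt_of_le_of_lt hu.2 hM⟩
    rw [this, Real.volume_Ioc]
  · have hM1 : M = 1 := le_antisymm h1 hM
    have : Ioc m M ∩ Ioo (0:ℝ) 1 = Ioo m 1 := by
      subst hM1
      ext u
      simp only [mem_inter_iff, mem_Ioc, mem_Ioo]
      constructor
      · rintro ⟨⟨ha, _⟩, _, h4⟩; exact ⟨ha, h4⟩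
      · rintro ⟨ha, hb⟩; exact ⟨⟨ha, hb.le⟩, lt_of_le_of_lt h0 ha, hb⟩
    rw [this, Real.volume_Ioo, hM1]

lemma vol_Ico_inter {m M : ℝ} (h0 : 0 ≤ m) (hm : m ≤ M) (h1 : M ≤ 1) :
    volume (Ico m M ∩ Ioo (0:ℝ) 1) = ENNReal.ofReal (M - m) := by
  rcases eq_or_lt_of_le h0 with hm0 | hm0
  · have : Ico m M ∩ Ioo (0:ℝ) 1 = Ioo 0 M := by
      rw [← hm0]
      ext u
      simp only [mem_inter_iff, mem_Ico, mem_Ioo]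
      constructor
      · rintro ⟨⟨_, h2⟩, h3, _⟩; exact ⟨h3, h2⟩
      · rintro ⟨ha, hb⟩; exact ⟨⟨ha.le, hb⟩, ha, lt_of_lt_of_le hb h1⟩
    rw [this, Real.volume_Ioo, ← hm0, sub_zero]
  · have : Ico m M ∩ Ioo (0:ℝ) 1 = Ico m M := by
      apply inter_eq_left.mpr
      intro u hu
      exact ⟨lt_of_lt_of_le hm0 hu.1, lt_of_lt_of_le hu.2 h1⟩
    rw [this, Real.volume_Ico]

lemma xor_le_Ioc (a b u : ℝ) : ((u ≤ a) ≠ (u ≤ b)) ↔ (min a b < u ∧ u ≤ max a b) := by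
  constructor
  · intro h
    by_cases ha : u ≤ a <;> by_cases hb : u ≤ b
    · exact absurd (propext (iff_of_true ha hb)) h
    · exact ⟨min_lt_iff.mpr (Or.inr (not_le.mp hb)), le_max_iff.mpr (Or.inl ha)⟩
    · exact ⟨min_lt_iff.mpr (Or.inl (not_le.mp ha)), le_max_iff.mpr (Or.inr hb)⟩
    · exact absurd (propext (iff_of_false ha hb)) h
  · rintro ⟨h1, h2⟩ h
    replace h := iff_of_eq h
    rw [min_lt_iff] at h1; rw [le_max_iff] at h2
    rcases h1 with h1 | h1 <;> rcases h2 with h2 | h2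
    · linarith
    · exact absurd (h.mpr h2) (not_le.mpr h1)
    · exact absurd (h.mp h2) (not_le.mpr h1)
    · linarith

lemma xor_ge_Ico (a b t : ℝ) : ((a ≤ t) ≠ (b ≤ t)) ↔ (min a b ≤ t ∧ t < max a b) := by
  constructor
  · intro h
    by_cases ha : a ≤ t <;> by_cases hb : b ≤ t
    · exact absurd (propext (iff_of_true ha hb)) h
    · exact ⟨min_le_iff.mpr (Or.inl ha), lt_max_iff.mpr (Or.inr (not_le.mp hb))⟩
    · exact ⟨min_le_iff.mpr (Or.inr hb), lt_max_iff.mpr (Or.inl (not_le.mp ha))⟩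
    · exact absurd (propext (iff_of_false ha hb)) h
  · rintro ⟨h1, h2⟩ h
    replace h := iff_of_eq h
    rw [min_le_iff] at h1; rw [lt_max_iff] at h2
    rcases h1 with h1 | h1 <;> rcases h2 with h2 | h2
    · linarith
    · exact absurd (h.mp h1) (not_le.mpr h2)
    · exact absurd (h.mpr h1) (not_le.mpr h2)
    · linarith

section supported
variable (ν : Measure ℝ) [IsProbabilityMeasure ν]

lemma mcdf_zero_of_neg (hν : ν (Icc (0:ℝ) 1)ᶜ = 0) {t : ℝ} (ht : t < 0) : mcdf ν t = 0 := by
  rw [mcdf]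
  have : ν (Iic t) = 0 := by
    apply measure_mono_null _ hν
    intro y hy
    simp only [mem_compl_iff, mem_Icc, not_and_or, not_le]
    exact Or.inl (lt_of_le_of_lt hy ht)
  rw [this, ENNReal.toReal_zero]

lemma mcdf_one_at_one (hν : ν (Icc (0:ℝ) 1)ᶜ = 0) : mcdf ν 1 = 1 := by
  have h2 : (1:ENNReal) ≤ ν (Iic 1) := by
    have hsub : (univ : Set ℝ) ⊆ Iic 1 ∪ (Icc (0:ℝ) 1)ᶜ := by
      intro x _
      by_cases hx : x ≤ 1
      · exact Or.inl hx
      · exact Or.inr (by simp only [mem_compl_iff, mem_Icc, not_and_or, not_le]; right; linarith)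
    calc (1:ENNReal) = ν univ := (measure_univ).symm
      _ ≤ ν (Iic 1) + ν (Icc (0:ℝ) 1)ᶜ := le_trans (measure_mono hsub) (measure_union_le _ _)
      _ = ν (Iic 1) := by rw [hν, add_zero]
  have : ν (Iic 1) = 1 := le_antisymm prob_le_one h2
  rw [mcdf, this, ENNReal.toReal_one]

lemma mq_mem_Icc (hν : ν (Icc (0:ℝ) 1)ᶜ = 0) {u : ℝ} (hu : u ∈ Ioo (0:ℝ) 1) : mq ν u ∈ Icc (0:ℝ) 1 := by
  constructor
  · apply le_csInf (mq_set_nonempty ν hu.2)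
    intro t ht
    by_contra hc
    push_neg at hc
    rw [mem_setOf_eq, mcdf_zero_of_neg ν hν hc] at ht
    exact absurd (lt_of_lt_of_le hu.1 ht) (lt_irrefl 0)
  · exact csInf_le (mq_set_bddBelow ν hu.1)
      (by rw [mem_setOf_eq, mcdf_one_at_one ν hν]; exact hu.2.le)

end supported

lemma quantile_cdf_L1 (ν0 ν1 : Measure ℝ) [IsProbabilityMeasure ν0] [IsProbabilityMeasure ν1]
    (h0 : ν0 (Icc (0:ℝ) 1)ᶜ = 0) (h1 : ν1 (Icc (0:ℝ) 1)ᶜ = 0) :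
    ∫ u in Ioo (0:ℝ) 1, |mqI ν0 u - mqI ν1 u| = ∫ t in Ioo (0:ℝ) 1, |mcdf ν0 t - mcdf ν1 t| := by
  set ρI := volume.restrict (Ioo (0:ℝ) 1) with hρI
  set D : Set (ℝ × ℝ) := {p | (p.2 ≤ mcdf ν0 p.1) ≠ (p.2 ≤ mcdf ν1 p.1)} with hD
  have hA : MeasurableSet {p : ℝ × ℝ | p.2 ≤ mcdf ν0 p.1} :=
    measurableSet_le measurable_snd ((mcdf_measurable ν0).comp measurable_fst)
  have hB : MeasurableSet {p : ℝ × ℝ | p.2 ≤ mcdf ν1 p.1} :=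
    measurableSet_le measurable_snd ((mcdf_measurable ν1).comp measurable_fst)
  have hDm : MeasurableSet D := by
    have : D = ({p : ℝ × ℝ | p.2 ≤ mcdf ν0 p.1} ∩ {p : ℝ × ℝ | p.2 ≤ mcdf ν1 p.1}ᶜ)
        ∪ ({p : ℝ × ℝ | p.2 ≤ mcdf ν0 p.1}ᶜ ∩ {p : ℝ × ℝ | p.2 ≤ mcdf ν1 p.1}) := by
      ext p
      simp only [hD, mem_setOf_eq, mem_union, mem_inter_iff, mem_compl_iff, mem_setOf_eq, ne_eq]
      by_cases h1' : p.2 ≤ mcdf ν0 p.1 <;> by_cases h2' : p.2 ≤ mcdf ν1 p.1 <;>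
        simp [h1', h2']
    rw [this]
    exact (hA.inter hB.compl).union (hA.compl.inter hB)
  have side1 : (ρI.prod ρI) D = ∫⁻ t, ENNReal.ofReal |mcdf ν0 t - mcdf ν1 t| ∂ρI := by
    rw [Measure.prod_apply hDm]
    apply lintegral_congr
    intro t
    have hset : Prod.mk t ⁻¹' D
        = Ioc (min (mcdf ν0 t) (mcdf ν1 t)) (max (mcdf ν0 t) (mcdf ν1 t)) := by
      ext u
      rw [mem_preimage, mem_Ioc]
      exact xor_le_Ioc (mcdf ν0 t) (mcdf ν1 t) u
    rw [hset, hρI, Measure.restrict_apply' measurableSet_Ioo,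
      vol_Ioc_inter (le_min (mcdf_nonneg ν0 t) (mcdf_nonneg ν1 t)) min_le_max
        (max_le (mcdf_le_one ν0 t) (mcdf_le_one ν1 t)),
      max_sub_min_eq_abs, abs_sub_comm]
  have side2 : (ρI.prod ρI) D = ∫⁻ u, ENNReal.ofReal |mqI ν0 u - mqI ν1 u| ∂ρI := by
    rw [Measure.prod_apply_symm hDm]
    apply lintegral_congr_ae
    filter_upwards [ae_restrict_mem measurableSet_Ioo] with u hu
    have hset : (fun t => (t, u)) ⁻¹' D
        = Ico (min (mqI ν0 u) (mqI ν1 u)) (max (mqI ν0 u) (mqI ν1 u)) := by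
      ext t
      rw [mem_preimage, mem_Ico]
      have e0 : (u ≤ mcdf ν0 t) = (mqI ν0 u ≤ t) := by
        rw [mqI_eq ν0 hu]; exact propext (mq_galois ν0 hu t).symm
      have e1 : (u ≤ mcdf ν1 t) = (mqI ν1 u ≤ t) := by
        rw [mqI_eq ν1 hu]; exact propext (mq_galois ν1 hu t).symm
      show ((u ≤ mcdf ν0 t) ≠ (u ≤ mcdf ν1 t)) ↔ _
      rw [e0, e1]
      exact xor_ge_Ico (mqI ν0 u) (mqI ν1 u) t
    have hq0 := mq_mem_Icc ν0 h0 hu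
    have hq1 := mq_mem_Icc ν1 h1 hu
    rw [← mqI_eq ν0 hu] at hq0
    rw [← mqI_eq ν1 hu] at hq1
    rw [hset, hρI, Measure.restrict_apply' measurableSet_Ioo,
      vol_Ico_inter (le_min hq0.1 hq1.1) min_le_max (max_le hq0.2 hq1.2),
      max_sub_min_eq_abs, abs_sub_comm]
  have conv1 : ∫ u in Ioo (0:ℝ) 1, |mqI ν0 u - mqI ν1 u|
      = (∫⁻ u, ENNReal.ofReal |mqI ν0 u - mqI ν1 u| ∂ρI).toReal := by
    rw [integral_eq_lintegral_of_nonneg_ae (f := fun u => |mqI ν0 u - mqI ν1 u|) (ae_of_all _ (fun u => abs_nonneg _))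
      (((mqI_measurable ν0).sub (mqI_measurable ν1)).abs.aestronglyMeasurable)]
  have conv2 : ∫ t in Ioo (0:ℝ) 1, |mcdf ν0 t - mcdf ν1 t|
      = (∫⁻ t, ENNReal.ofReal |mcdf ν0 t - mcdf ν1 t| ∂ρI).toReal := by
    rw [integral_eq_lintegral_of_nonneg_ae (f := fun t => |mcdf ν0 t - mcdf ν1 t|) (ae_of_all _ (fun t => abs_nonneg _))
      (((mcdf_measurable ν0).sub (mcdf_measurable ν1)).abs.aestronglyMeasurable)]
  rw [conv1, conv2, ← side1, ← side2]

section lemA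
variable (ν0 ν1 : Measure ℝ) [IsProbabilityMeasure ν0] [IsProbabilityMeasure ν1]

lemma coupling_exists (h0 : ν0 (Icc (0:ℝ) 1)ᶜ = 0) (h1 : ν1 (Icc (0:ℝ) 1)ᶜ = 0) :
    ∃ γ : Measure (ℝ × ℝ), IsProbabilityMeasure γ ∧ IsCoupling γ ν0 ν1 ∧
      (∫ p, |p.1 - p.2| ∂γ) = ∫ t in Ioo (0:ℝ) 1, |mcdf ν0 t - mcdf ν1 t| := by
  have hpm : Measurable (fun u => (mqI ν0 u, mqI ν1 u)) :=
    (mqI_measurable ν0).prodMk (mqI_measurable ν1)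
  refine ⟨(volume.restrict (Ioo (0:ℝ) 1)).map (fun u => (mqI ν0 u, mqI ν1 u)),
    Measure.isProbabilityMeasure_map hpm.aemeasurable, ⟨?_, ?_⟩, ?_⟩
  · rw [Measure.map_map measurable_fst hpm]
    exact map_mqI ν0
  · rw [Measure.map_map measurable_snd hpm]
    exact map_mqI ν1
  · have hsm : AEStronglyMeasurable (fun p : ℝ × ℝ => |p.1 - p.2|)
        (((volume.restrict (Ioo (0:ℝ) 1))).map (fun u => (mqI ν0 u, mqI ν1 u))) :=
      (continuous_fst.sub continuous_snd).abs.aestronglyMeasurable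
    rw [integral_map hpm.aemeasurable hsm]
    exact quantile_cdf_L1 ν0 ν1 h0 h1

lemma coupling_lower (h0 : ν0 (Icc (0:ℝ) 1)ᶜ = 0) (h1 : ν1 (Icc (0:ℝ) 1)ᶜ = 0)
    (γ : Measure (ℝ × ℝ)) (hγp : IsProbabilityMeasure γ) (hγ : IsCoupling γ ν0 ν1) :
    ∫ t in Ioo (0:ℝ) 1, |mcdf ν0 t - mcdf ν1 t| ≤ ∫ p, |p.1 - p.2| ∂γ := by
  obtain ⟨hfst, hsnd⟩ := hγ
  set ρI := volume.restrict (Ioo (0:ℝ) 1) with hρI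
  have hae1 : ∀ᵐ p ∂γ, p.1 ∈ Icc (0:ℝ) 1 := by
    rw [ae_iff]
    have hs : {p : ℝ × ℝ | ¬ p.1 ∈ Icc (0:ℝ) 1} = Prod.fst ⁻¹' (Icc (0:ℝ) 1)ᶜ := rfl
    rw [hs, ← Measure.map_apply measurable_fst measurableSet_Icc.compl, hfst]
    exact h0
  have hae2 : ∀ᵐ p ∂γ, p.2 ∈ Icc (0:ℝ) 1 := by
    rw [ae_iff]
    have hs : {p : ℝ × ℝ | ¬ p.2 ∈ Icc (0:ℝ) 1} = Prod.snd ⁻¹' (Icc (0:ℝ) 1)ᶜ := rfl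
    rw [hs, ← Measure.map_apply measurable_snd measurableSet_Icc.compl, hsnd]
    exact h1
  set F : (ℝ × ℝ) × ℝ → ℝ := fun q =>
    |({q : (ℝ × ℝ) × ℝ | q.1.1 ≤ q.2}.indicator (fun _ => (1:ℝ)) q)
      - ({q : (ℝ × ℝ) × ℝ | q.1.2 ≤ q.2}.indicator (fun _ => (1:ℝ)) q)| with hF
  have hS1 : MeasurableSet {q : (ℝ × ℝ) × ℝ | q.1.1 ≤ q.2} :=
    measurableSet_le measurable_fst.fst measurable_snd
  have hS2 : MeasurableSet {q : (ℝ × ℝ) × ℝ | q.1.2 ≤ q.2} :=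
    measurableSet_le measurable_fst.snd measurable_snd
  have hFm : Measurable F :=
    ((measurable_const.indicator hS1).sub (measurable_const.indicator hS2)).abs
  have hFb : ∀ q, ‖F q‖ ≤ 1 := by
    intro q
    rw [Real.norm_eq_abs, hF, abs_abs]
    simp only [Set.indicator_apply]
    split_ifs <;> norm_num
  have hFval : ∀ p : ℝ × ℝ, ∀ t : ℝ, F (p, t)
      = if ((p.1 ≤ t) ≠ (p.2 ≤ t)) then (1:ℝ) else 0 := by
    intro p t
    rw [hF]
    simp only [Set.indicator_apply, mem_setOf_eq]
    by_cases h1t : p.1 ≤ t <;> by_cases h2t : p.2 ≤ t <;> simp [h1t, h2t]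
  haveI := hγp
  haveI : IsProbabilityMeasure ρI := by rw [hρI]; infer_instance
  have hFint : Integrable F (γ.prod ρI) :=
    Integrable.mono' (integrable_const 1) hFm.aestronglyMeasurable (ae_of_all _ hFb)
  have hpoint : ∀ p : ℝ × ℝ, p.1 ∈ Icc (0:ℝ) 1 → p.2 ∈ Icc (0:ℝ) 1 →
      (∫ t in Ioo (0:ℝ) 1, F (p, t)) = |p.1 - p.2| := by
    intro p hp1 hp2
    have hind : ∀ t : ℝ, F (p, t)
        = (Ico (min p.1 p.2) (max p.1 p.2)).indicator (fun _ => (1:ℝ)) t := by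
      intro t
      rw [hFval p t, Set.indicator_apply]
      congr 1
      rw [eq_iff_iff, mem_Ico]
      exact xor_ge_Ico p.1 p.2 t
    simp_rw [hind]
    rw [integral_indicator_const (1:ℝ) measurableSet_Ico, measureReal_def, Measure.restrict_apply'
      measurableSet_Ioo, vol_Ico_inter (le_min hp1.1 hp2.1) min_le_max (max_le hp1.2 hp2.2),
      smul_eq_mul, mul_one, ENNReal.toReal_ofReal (by simp [min_le_max] : (0:ℝ) ≤ _),
      max_sub_min_eq_abs, abs_sub_comm]
  have stepA : ∫ p, |p.1 - p.2| ∂γ = ∫ p, (∫ t in Ioo (0:ℝ) 1, F (p, t)) ∂γ := by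
    apply integral_congr_ae
    filter_upwards [hae1, hae2] with p hp1 hp2
    exact (hpoint p hp1 hp2).symm
  have huncurry : Function.uncurry (fun (p : ℝ × ℝ) (t : ℝ) => F (p, t)) = F :=
    funext fun q => by simp [Function.uncurry]
  have stepB : ∫ p, (∫ t in Ioo (0:ℝ) 1, F (p, t)) ∂γ
      = ∫ t in Ioo (0:ℝ) 1, (∫ p, F (p, t) ∂γ) := by
    exact integral_integral_swap (by rw [huncurry]; exact hFint)
  have stepC : ∀ t : ℝ, |mcdf ν0 t - mcdf ν1 t| ≤ ∫ p, F (p, t) ∂γ := by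
    intro t
    set A : Set (ℝ × ℝ) := Prod.fst ⁻¹' Iic t with hA'
    set B : Set (ℝ × ℝ) := Prod.snd ⁻¹' Iic t with hB'
    have hA : MeasurableSet A := measurable_fst measurableSet_Iic
    have hB : MeasurableSet B := measurable_snd measurableSet_Iic
    have hFA : ∀ p : ℝ × ℝ, F (p, t)
        = |A.indicator (fun _ => (1:ℝ)) p - B.indicator (fun _ => (1:ℝ)) p| := by
      intro p
      rw [hF]
      simp only [Set.indicator_apply, mem_setOf_eq, hA', hB', mem_preimage, mem_Iic]
      by_cases h1t : p.1 ≤ t <;> by_cases h2t : p.2 ≤ t <;> simp [h1t, h2t]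
    have hiA : Integrable (A.indicator (fun _ => (1:ℝ))) γ :=
      (integrable_const (1:ℝ)).indicator hA
    have hiB : Integrable (B.indicator (fun _ => (1:ℝ))) γ :=
      (integrable_const (1:ℝ)).indicator hB
    have hγA : (γ A).toReal = mcdf ν0 t := by
      rw [hA', ← hfst, mcdf, Measure.map_apply measurable_fst measurableSet_Iic]
    have hγB : (γ B).toReal = mcdf ν1 t := by
      rw [hB', ← hsnd, mcdf, Measure.map_apply measurable_snd measurableSet_Iic]
    have key : mcdf ν0 t - mcdf ν1 t
        = ∫ p, (A.indicator (fun _ => (1:ℝ)) p - B.indicator (fun _ => (1:ℝ)) p) ∂γ := by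
      rw [integral_sub hiA hiB, integral_indicator_const (1:ℝ) hA,
        integral_indicator_const (1:ℝ) hB, measureReal_def, measureReal_def, smul_eq_mul, smul_eq_mul, mul_one, mul_one, hγA, hγB]
    calc |mcdf ν0 t - mcdf ν1 t|
        = |∫ p, (A.indicator (fun _ => (1:ℝ)) p - B.indicator (fun _ => (1:ℝ)) p) ∂γ| := by
          rw [key]
      _ ≤ ∫ p, |A.indicator (fun _ => (1:ℝ)) p - B.indicator (fun _ => (1:ℝ)) p| ∂γ := by
          simpa [Real.norm_eq_abs] using
            norm_integral_le_integral_norm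
              (fun p => A.indicator (fun _ => (1:ℝ)) p - B.indicator (fun _ => (1:ℝ)) p) (μ := γ)
      _ = ∫ p, F (p, t) ∂γ := by
          apply integral_congr_ae
          exact ae_of_all _ (fun p => (hFA p).symm)
  have hint1 : Integrable (fun t => |mcdf ν0 t - mcdf ν1 t|) ρI := by
    apply Integrable.mono' (integrable_const (2:ℝ))
      ((mcdf_measurable ν0).sub (mcdf_measurable ν1)).abs.aestronglyMeasurable
    apply ae_of_all
    intro t
    rw [Real.norm_eq_abs, abs_abs]
    have := abs_sub (mcdf ν0 t) (mcdf ν1 t)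
    calc |mcdf ν0 t - mcdf ν1 t| ≤ |mcdf ν0 t| + |mcdf ν1 t| := abs_sub _ _
      _ ≤ 2 := by
          rw [abs_of_nonneg (mcdf_nonneg ν0 t), abs_of_nonneg (mcdf_nonneg ν1 t)]
          linarith [mcdf_le_one ν0 t, mcdf_le_one ν1 t]
  have hint2 : Integrable (fun t => ∫ p, F (p, t) ∂γ) ρI := by
    have := hFint.integral_prod_right
    exact this
  calc ∫ t in Ioo (0:ℝ) 1, |mcdf ν0 t - mcdf ν1 t|
      ≤ ∫ t in Ioo (0:ℝ) 1, (∫ p, F (p, t) ∂γ) := integral_mono hint1 hint2 stepC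
    _ = ∫ p, |p.1 - p.2| ∂γ := by rw [stepA, stepB]

lemma lemA (h0 : ν0 (Icc (0:ℝ) 1)ᶜ = 0) (h1 : ν1 (Icc (0:ℝ) 1)ᶜ = 0) :
    W1 ν0 ν1 = ∫ t in Ioo (0:ℝ) 1, |mcdf ν0 t - mcdf ν1 t| := by
  obtain ⟨γ, hγp, hγc, hγv⟩ := coupling_exists ν0 ν1 h0 h1
  have hmem : (∫ t in Ioo (0:ℝ) 1, |mcdf ν0 t - mcdf ν1 t|)
      ∈ { r : ℝ | ∃ γ : Measure (ℝ × ℝ),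
        IsProbabilityMeasure γ ∧ IsCoupling γ ν0 ν1 ∧ r = ∫ p, |p.1 - p.2| ∂γ } :=
    ⟨γ, hγp, hγc, hγv.symm⟩
  have hlb : ∀ r ∈ { r : ℝ | ∃ γ : Measure (ℝ × ℝ),
      IsProbabilityMeasure γ ∧ IsCoupling γ ν0 ν1 ∧ r = ∫ p, |p.1 - p.2| ∂γ },
      (∫ t in Ioo (0:ℝ) 1, |mcdf ν0 t - mcdf ν1 t|) ≤ r := by
    rintro r ⟨γ', hγ'p, hγ'c, rfl⟩
    exact coupling_lower ν0 ν1 h0 h1 γ' hγ'p hγ'c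
  exact le_antisymm (csInf_le ⟨_, hlb⟩ hmem) (le_csInf ⟨_, hmem⟩ hlb)

end lemA

/-- `∫ |F_{Z0}(t) − F_{Z1}(t)| μ(dt)` equals the `L¹` distance of the
CDFs of `F̃_μ(Z0)` and `F̃_μ(Z1)` on `(0,1)`, which equals the Wasserstein-1 distance
between the laws of `F̃_μ(Z0)` and `F̃_μ(Z1)`; if `μ` is atomless, it also equals
`W₁(P_{F_μ(Z0)}, P_{F_μ(Z1)})`. -/
theorem stmt_16 {Ω : Type*} [MeasurableSpace Ω] (P : MeasureTheory.Measure Ω)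
    [MeasureTheory.IsProbabilityMeasure P]
    (Z0 Z1 : Ω → ℝ) (hZ0 : Measurable Z0) (hZ1 : Measurable Z1)
    (μ : MeasureTheory.Measure ℝ) [MeasureTheory.IsProbabilityMeasure μ] :
    (∫ t, |(P {ω | Z0 ω ≤ t}).toReal - (P {ω | Z1 ω ≤ t}).toReal| ∂μ
      = ∫ q in (0 : ℝ)..1,
          |(P {ω | mlcdf μ (Z0 ω) ≤ q}).toReal - (P {ω | mlcdf μ (Z1 ω) ≤ q}).toReal|)
    ∧ (∫ t, |(P {ω | Z0 ω ≤ t}).toReal - (P {ω | Z1 ω ≤ t}).toReal| ∂μ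
      = W1 (P.map (fun ω => mlcdf μ (Z0 ω))) (P.map (fun ω => mlcdf μ (Z1 ω))))
    ∧ ((∀ x : ℝ, μ {x} = 0) →
        ∫ t, |(P {ω | Z0 ω ≤ t}).toReal - (P {ω | Z1 ω ≤ t}).toReal| ∂μ
          = W1 (P.map (fun ω => mcdf μ (Z0 ω))) (P.map (fun ω => mcdf μ (Z1 ω)))) := by
  have hm0 : Measurable (fun ω => mlcdf μ (Z0 ω)) := (mlcdf_measurable μ).comp hZ0
  have hm1 : Measurable (fun ω => mlcdf μ (Z1 ω)) := (mlcdf_measurable μ).comp hZ1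
  set lam0 := P.map Z0 with hlam0
  set lam1 := P.map Z1 with hlam1
  haveI : IsProbabilityMeasure lam0 := Measure.isProbabilityMeasure_map hZ0.aemeasurable
  haveI : IsProbabilityMeasure lam1 := Measure.isProbabilityMeasure_map hZ1.aemeasurable
  set ν0 := P.map (fun ω => mlcdf μ (Z0 ω)) with hν0
  set ν1 := P.map (fun ω => mlcdf μ (Z1 ω)) with hν1
  haveI : IsProbabilityMeasure ν0 := Measure.isProbabilityMeasure_map hm0.aemeasurable
  haveI : IsProbabilityMeasure ν1 := Measure.isProbabilityMeasure_map hm1.aemeasurable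
  have hmap0 : ν0 = lam0.map (mlcdf μ) := by
    rw [hν0, hlam0, Measure.map_map (mlcdf_measurable μ) hZ0]; rfl
  have hmap1 : ν1 = lam1.map (mlcdf μ) := by
    rw [hν1, hlam1, Measure.map_map (mlcdf_measurable μ) hZ1]; rfl
  have hLHS0 : ∀ t, (P {ω | Z0 ω ≤ t}).toReal = mcdf lam0 t := by
    intro t; rw [mcdf, hlam0, Measure.map_apply hZ0 measurableSet_Iic]; rfl
  have hLHS1 : ∀ t, (P {ω | Z1 ω ≤ t}).toReal = mcdf lam1 t := by
    intro t; rw [mcdf, hlam1, Measure.map_apply hZ1 measurableSet_Iic]; rfl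
  have hG0 : ∀ q, (P {ω | mlcdf μ (Z0 ω) ≤ q}).toReal = mcdf ν0 q := by
    intro q; rw [mcdf, hν0, Measure.map_apply hm0 measurableSet_Iic]; rfl
  have hG1 : ∀ q, (P {ω | mlcdf μ (Z1 ω) ≤ q}).toReal = mcdf ν1 q := by
    intro q; rw [mcdf, hν1, Measure.map_apply hm1 measurableSet_Iic]; rfl
  have hsupp0 : ν0 (Icc (0:ℝ) 1)ᶜ = 0 := by
    have hemp : (fun ω => mlcdf μ (Z0 ω)) ⁻¹' (Icc (0:ℝ) 1)ᶜ = ∅ := by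
      ext ω
      simp [mlcdf_nonneg μ (Z0 ω), mlcdf_le_one μ (Z0 ω)]
    rw [hν0, Measure.map_apply hm0 measurableSet_Icc.compl, hemp, measure_empty]
  have hsupp1 : ν1 (Icc (0:ℝ) 1)ᶜ = 0 := by
    have hemp : (fun ω => mlcdf μ (Z1 ω)) ⁻¹' (Icc (0:ℝ) 1)ᶜ = ∅ := by
      ext ω
      simp [mlcdf_nonneg μ (Z1 ω), mlcdf_le_one μ (Z1 ω)]
    rw [hν1, Measure.map_apply hm1 measurableSet_Icc.compl, hemp, measure_empty]
  have key : ∫ t, |(P {ω | Z0 ω ≤ t}).toReal - (P {ω | Z1 ω ≤ t}).toReal| ∂μ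
      = ∫ u in Ioo (0:ℝ) 1, |mcdf ν0 u - mcdf ν1 u| := by
    simp_rw [hLHS0, hLHS1]
    rw [hmap0, hmap1]
    exact lemB μ lam0 lam1
  refine ⟨?_, ?_, ?_⟩
  · rw [key, intervalIntegral.integral_of_le zero_le_one,
      MeasureTheory.integral_Ioc_eq_integral_Ioo]
    simp_rw [hG0, hG1]
  · rw [key]
    exact (lemA ν0 ν1 hsupp0 hsupp1).symm
  · intro hatom
    have hml : mcdf μ = mlcdf μ := by
      funext x
      have hsplit : Iic x = Iio x ∪ {x} := (Iio_union_right).symm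
      rw [mcdf, mlcdf, hsplit, measure_union (disjoint_singleton_right.mpr (by simp))
        (measurableSet_singleton x), hatom x, add_zero]
    rw [hml, ← hν0, ← hν1, key]
    exact (lemA ν0 ν1 hsupp0 hsupp1).symm
end
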